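/- In the 2-LCCP model, the label of a coupon c can be deduced from a collection of samples if and only if c lies in a connected component of size at least 3 in the auxiliary graph H on the coupons, whose edges are the pairs of coupons sampled together. -/

import Mathlib

/-- The auxiliary coupon graph of the 2-LCCP model: two coupons are adjacent iff the
pair was sampled together. `S` is the set of sampled coupon pairs. -/
def sampleGraph {n : ℕ} (S : Set (Finset (Fin n))) : SimpleGraph (Fin n) where
  Adj a b := a ≠ b ∧ ({a, b} : Finset (Fin n)) ∈ S
  symm := by
    refine ⟨fun a b h => ?_⟩
    exact ⟨h.1.symm, by rw [Finset.pair_comm]; exact h.2⟩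
  loopless := by refine ⟨fun a h => ?_⟩; exact h.1 rfl

/-- Along an edge, the pair of labels is revealed: either both endpoints are labeled
correctly by `f` or both are swapped. -/
lemma lccp_adj_cases {n : ℕ} {S : Set (Finset (Fin n))} {e f : Fin n → ℕ}
    (he : Function.Injective e) (hf : Function.Injective f)
    (himg : ∀ P ∈ S, P.image f = P.image e)
    {a b : Fin n} (hab : (sampleGraph S).Adj a b) :
    (f a = e a ∧ f b = e b) ∨ (f a = e b ∧ f b = e a) := by
  obtain ⟨hne, hmem⟩ := hab
  have h := himg _ hmem
  simp only [Finset.image_insert, Finset.image_singleton] at h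
  have hfa : f a = e a ∨ f a = e b := by
    have : f a ∈ ({e a, e b} : Finset ℕ) := h ▸ Finset.mem_insert_self _ _
    simpa using this
  rcases hfa with hfa | hfa
  · left
    refine ⟨hfa, ?_⟩
    have hfb : f b = e a ∨ f b = e b := by
      have : f b ∈ ({e a, e b} : Finset ℕ) := by
        rw [← h]; simp
      simpa using this
    rcases hfb with hfb | hfb
    · exact absurd (hf (hfb.trans hfa.symm)) (Ne.symm hne)
    · exact hfb
  · right
    refine ⟨hfa, ?_⟩
    have hea : e a = f a ∨ e a = f b := by
      have : e a ∈ ({f a, f b} : Finset ℕ) := by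
        rw [h]; simp
      simpa using this
    rcases hea with hea | hea
    · exact absurd (he (hea.trans hfa)) hne
    · exact hea.symm

lemma lccp_adj_iff {n : ℕ} {S : Set (Finset (Fin n))} {e f : Fin n → ℕ}
    (he : Function.Injective e) (hf : Function.Injective f)
    (himg : ∀ P ∈ S, P.image f = P.image e)
    {a b : Fin n} (hab : (sampleGraph S).Adj a b) :
    (f a = e a ↔ f b = e b) := by
  rcases lccp_adj_cases he hf himg hab with ⟨h1, h2⟩ | ⟨h1, h2⟩
  · simp [h1, h2]
  · constructor
    · intro h; exact absurd (he (h ▸ h1 : e a = e b)) hab.1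
    · intro h; exact absurd (he ((h ▸ h2 : e b = e a)).symm) hab.1

lemma lccp_reach_iff {n : ℕ} {S : Set (Finset (Fin n))} {e f : Fin n → ℕ}
    (he : Function.Injective e) (hf : Function.Injective f)
    (himg : ∀ P ∈ S, P.image f = P.image e)
    {a b : Fin n} (hab : (sampleGraph S).Reachable a b) :
    (f a = e a ↔ f b = e b) := by
  obtain ⟨w⟩ := hab
  induction w with
  | nil => rfl
  | cons h w ih => exact (lccp_adj_iff he hf himg h).trans ih

/-- In the 2-LCCP model (hidden injective labeling `e : Fin n → ℕ`, each sample
revealing a pair of coupons and the unordered set of their labels), the label of a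
coupon `c` is deducible from the set `S` of sampled pairs iff `c` lies in a connected
component of size at least 3 of the auxiliary graph on the coupons. -/
theorem two_LCCP_deducible_iff_component_ge_three (n : ℕ) (e : Fin n → ℕ)
    (he : Function.Injective e) (S : Set (Finset (Fin n)))
    (hS : ∀ P ∈ S, P.card = 2) (c : Fin n) :
    (∀ f : Fin n → ℕ, Function.Injective f →
        (∀ P ∈ S, P.image f = P.image e) → f c = e c)
      ↔ 3 ≤ ((sampleGraph S).connectedComponentMk c).supp.ncard := by
  set G := sampleGraph S with hG
  have memsupp : ∀ x : Fin n,
      x ∈ (G.connectedComponentMk c).supp ↔ G.Reachable x c := by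
    intro x
    rw [SimpleGraph.ConnectedComponent.mem_supp_iff, SimpleGraph.ConnectedComponent.eq]
  have hcsupp : c ∈ (G.connectedComponentMk c).supp := (memsupp c).mpr (.refl c)
  constructor
  · -- deducible → component ≥ 3
    intro hded
    by_contra h3
    push_neg at h3
    by_cases hcase : ∀ x ∈ (G.connectedComponentMk c).supp, x = c
    · -- isolated vertex: bump the label of c
      obtain ⟨N, hNe⟩ : ∃ N, ∀ x, e x ≠ N :=
        ⟨(Finset.univ.sup e) + 1, fun x h => by
          have := Finset.le_sup (f := e) (Finset.mem_univ x); omega⟩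
      have hfinj : Function.Injective (Function.update e c N) := by
        intro x y hxy
        by_cases hx : x = c <;> by_cases hy : y = c
        · rw [hx, hy]
        · rw [hx, Function.update_self, Function.update_of_ne hy] at hxy
          exact absurd hxy.symm (hNe y)
        · rw [hy, Function.update_self, Function.update_of_ne hx] at hxy
          exact absurd hxy (hNe x)
        · rw [Function.update_of_ne hx, Function.update_of_ne hy] at hxy
          exact he hxy
      have hcP : ∀ P ∈ S, c ∉ P := by
        intro P hP hcP
        obtain ⟨a, b, hab, rfl⟩ := Finset.card_eq_two.mp (hS P hP)
        have hd : ∃ d, d ≠ c ∧ G.Adj c d := by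
          rcases Finset.mem_insert.mp hcP with h | h
          · have h' := h.symm
            subst h'
            exact ⟨b, fun hb => hab hb.symm, ⟨hab, hP⟩⟩
          · rw [Finset.mem_singleton] at h
            have h' := h.symm
            subst h'
            exact ⟨a, fun ha => hab ha, ⟨fun ha => hab ha.symm, by rwa [Finset.pair_comm]⟩⟩
        obtain ⟨d, hdc, hadj⟩ := hd
        exact hdc (hcase d ((memsupp d).mpr hadj.symm.reachable))
      have himg : ∀ P ∈ S, P.image (Function.update e c N) = P.image e := by
        intro P hP
        refine Finset.image_congr ?_
        intro x hx
        exact Function.update_of_ne (fun h => hcP P hP (by rw [← h]; exact Finset.mem_coe.mp hx)) _ _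
      have := hded (Function.update e c N) hfinj himg
      rw [Function.update_self] at this
      exact hNe c this.symm
    · -- component of size 2: swap c with its companion d
      push_neg at hcase
      obtain ⟨d, hd, hdc⟩ := hcase
      have hsub : (G.connectedComponentMk c).supp ⊆ {c, d} := by
        intro x hx
        by_contra hx2
        simp only [Set.mem_insert_iff, Set.mem_singleton_iff, not_or] at hx2
        have hcd : c ≠ d := fun h => hdc h.symm
        have h3' : ({c, d, x} : Set (Fin n)).ncard = 3 := by
          rw [Set.ncard_insert_of_notMem (by simp [hcd, Ne.symm hx2.1]),
            Set.ncard_insert_of_notMem (by simp [Ne.symm hx2.2]), Set.ncard_singleton]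
        have hsub' : ({c, d, x} : Set (Fin n)) ⊆ (G.connectedComponentMk c).supp := by
          intro y hy
          rcases hy with rfl | rfl | rfl
          · exact hcsupp
          · exact hd
          · exact hx
        have := Set.ncard_le_ncard hsub' (Set.toFinite _)
        omega
      set f := fun x => e (Equiv.swap c d x) with hf
      have hfinj : Function.Injective f := he.comp (Equiv.swap c d).injective
      have hadjsupp : ∀ {u v : Fin n}, G.Adj u v →
          u ∈ (G.connectedComponentMk c).supp → v ∈ (G.connectedComponentMk c).supp := by
        intro u v huv hu
        exact (memsupp v).mpr (huv.symm.reachable.trans ((memsupp u).mp hu))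
      have himg : ∀ P ∈ S, P.image f = P.image e := by
        intro P hP
        obtain ⟨a, b, hab, rfl⟩ := Finset.card_eq_two.mp (hS P hP)
        have hadj : G.Adj a b := ⟨hab, hP⟩
        by_cases hmem : a ∈ ({c, d} : Set (Fin n)) ∨ b ∈ ({c, d} : Set (Fin n))
        · have hasupp : a ∈ (G.connectedComponentMk c).supp := by
            rcases hmem with h | h
            · rcases h with rfl | h
              · exact hcsupp
              · rw [Set.mem_singleton_iff] at h; exact h ▸ hd
            · refine hadjsupp hadj.symm ?_
              rcases h with rfl | h
              · exact hcsupp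
              · rw [Set.mem_singleton_iff] at h; exact h ▸ hd
          have hbsupp := hadjsupp hadj hasupp
          have ha2 := hsub hasupp
          have hb2 := hsub hbsupp
          have hpair : ({a, b} : Finset (Fin n)) = {c, d} := by
            rcases ha2 with rfl | ha2 <;> rcases hb2 with rfl | hb2
            · exact absurd rfl hab
            · rw [Set.mem_singleton_iff] at hb2; rw [hb2]
            · rw [Set.mem_singleton_iff] at ha2; rw [ha2, Finset.pair_comm]
            · rw [Set.mem_singleton_iff] at ha2 hb2
              exact absurd (ha2.trans hb2.symm) hab
          rw [hpair]
          simp only [Finset.image_insert, Finset.image_singleton, hf,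
            Equiv.swap_apply_left, Equiv.swap_apply_right]
          rw [Finset.pair_comm]
        · push_neg at hmem
          simp only [Set.mem_insert_iff, Set.mem_singleton_iff, not_or] at hmem
          refine Finset.image_congr ?_
          intro x hx
          have hx' : x = a ∨ x = b := by simpa using hx
          have hxc : x ≠ c := by
            rcases hx' with rfl | rfl
            · exact hmem.1.1
            · exact hmem.2.1
          have hxd : x ≠ d := by
            rcases hx' with rfl | rfl
            · exact hmem.1.2
            · exact hmem.2.2
          simp [hf, Equiv.swap_apply_of_ne_of_ne hxc hxd]
      have := hded f hfinj himg
      rw [hf] at this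
      simp only [Equiv.swap_apply_left] at this
      exact hdc (he this)
  · -- component ≥ 3 → deducible
    intro h3 f hf himg
    by_contra hfc
    have hbad : ∀ x, G.Reachable x c → f x ≠ e x := by
      intro x hx h
      exact hfc ((lccp_reach_iff he hf himg hx).mp h)
    have hUniq : ∀ x y z, f x ≠ e x → G.Adj x y → G.Adj x z → y = z := by
      intro x y z hx hxy hxz
      rcases lccp_adj_cases he hf himg hxy with ⟨h1, _⟩ | ⟨h1, _⟩
      · exact absurd h1 hx
      rcases lccp_adj_cases he hf himg hxz with ⟨h1', _⟩ | ⟨h1', _⟩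
      · exact absurd h1' hx
      exact he (h1 ▸ h1')
    -- find a neighbor of c
    obtain ⟨x, hxsupp, hxc⟩ : ∃ x, x ∈ (G.connectedComponentMk c).supp ∧ x ≠ c := by
      obtain ⟨a, b, ha, hb, hab⟩ := (Set.one_lt_ncard_iff (Set.toFinite _)).mp
        (by omega : 1 < (G.connectedComponentMk c).supp.ncard)
      rcases eq_or_ne a c with rfl | hac
      · exact ⟨b, hb, fun h => hab h.symm⟩
      · exact ⟨a, ha, hac⟩
    obtain ⟨b, hcb⟩ : ∃ b, G.Adj c b := by
      obtain ⟨w⟩ := ((memsupp x).mp hxsupp).symm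
      cases w with
      | nil => exact absurd rfl hxc
      | cons h _ => exact ⟨_, h⟩
    have hfb : f b ≠ e b := hbad b hcb.symm.reachable
    have key : ∀ {u v : Fin n} (w : G.Walk u v), (u = c ∨ u = b) → (v = c ∨ v = b) := by
      intro u v w
      induction w with
      | nil => exact id
      | cons h w ih =>
        intro hu
        apply ih
        rcases hu with rfl | rfl
        · exact Or.inr (hUniq _ _ _ (hbad _ (.refl _)) h hcb)
        · exact Or.inl (hUniq _ _ _ hfb h hcb.symm)
    have hsub : (G.connectedComponentMk c).supp ⊆ {c, b} := by
      intro y hy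
      obtain ⟨w⟩ := ((memsupp y).mp hy).symm
      rcases key w (Or.inl rfl) with rfl | rfl
      · exact Or.inl rfl
      · exact Or.inr rfl
    have h1 := Set.ncard_le_ncard hsub (Set.toFinite _)
    have h2 : ({c, b} : Set (Fin n)).ncard ≤ 2 := by
      have := Set.ncard_insert_le c ({b} : Set (Fin n))
      rw [Set.ncard_singleton] at this
      omega
    omega
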